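/- arXiv:2604.09460 — 3 statements merged into one kernel-verified Lean document; each statement's English description precedes it below -/
import Mathlib

section
/- Optimal penal code for PCE (necessity): if x[0] ∈ PCEP, then choosing for each i ∈ N a path x[i] minimizing U_i over PCEP, the family {x[k]}_{k∈{0}∪N} satisfies: for all k ∈ {0}∪N, all periods τ ≥ 1, all nonempty coalitions C ⊆ N, and all ζ^C_τ ∈ Z^C, there exists j ∈ C with U_j(x[k]) ≥ U_j(x[k]; ζ^C_τ; x[j]). -/
open Set

section Setup

variable {N : Type*} [Fintype N] [DecidableEq N] {Z : N → Type*}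

/-- A stage-game action profile. -/
abbrev Profile (Z : N → Type*) := ∀ i, Z i

/-- An infinite path of action profiles. -/
abbrev RPath (Z : N → Type*) := ℕ → Profile Z

/-- The profile played in period `τ` when coalition `C` deviates to `ζ` (off `C`, players follow `x τ`). -/
def devProfile (x : RPath Z) (C : Finset N) (τ : ℕ) (ζ : Profile Z) : Profile Z :=
  fun i => if i ∈ C then ζ i else x τ i

/-- The spliced path `(x; ζ^C_τ; y)`: follow `x` before period `τ`, play the deviation profile at `τ`,
and follow `y` afterwards.  Periods are indexed from `0`. -/
def splice (x : RPath Z) (C : Finset N) (τ : ℕ) (ζ : Profile Z) (y : RPath Z) : RPath Z :=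
  fun t => if t < τ then x t else if t = τ then devProfile x C τ ζ else y (t - τ - 1)

/-- Discounted payoff `U_i(x) = (1-δ) ∑ δ^t u_i(x_t)`. -/
noncomputable def disc (u : N → Profile Z → ℝ) (δ : ℝ) (i : N) (x : RPath Z) : ℝ :=
  (1 - δ) * ∑' t : ℕ, δ ^ t * u i (x t)

/-- The coalitional enforceability operator `Ψ`. -/
def Psi (u : N → Profile Z → ℝ) (δ : ℝ) (Y : Set (RPath Z)) : Set (RPath Z) :=
  {x | ∀ C : Finset N, C.Nonempty → ∀ τ : ℕ, ∀ ζ : Profile Z,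
    ∃ p : N → RPath Z, (∀ i, p i ∈ Y) ∧
      ∃ i ∈ C, disc u δ i x ≥ disc u δ i (splice x C τ ζ (p i))}

/-- A history (position) is a finite list of past action profiles. -/
abbrev Hist (Z : N → Type*) := List (Profile Z)

/-- The history reached after `n` periods of following plan `f` from history `h`. -/
def planHist (f : Hist Z → Profile Z) (h : Hist Z) : ℕ → Hist Z
  | 0 => h
  | n + 1 => planHist f h n ++ [f (planHist f h n)]

/-- The continuation path prescribed by plan `f` after history `h`. -/
def planPath (f : Hist Z → Profile Z) (h : Hist Z) : RPath Z :=
  fun n => f (planHist f h n)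

/-- The position induced from `G` when coalition `C` deviates from path `x` in period `τ` via `ζ`. -/
def devHistory (G : Hist Z) (x : RPath Z) (C : Finset N) (τ : ℕ) (ζ : Profile Z) : Hist Z :=
  G ++ (List.ofFn fun t : Fin τ => x t) ++ [devProfile x C τ ζ]

/-- A Perfect Coalitional Equilibrium: after every history, every one-shot coalitional deviation
leaves some member of the deviating coalition no better off, given the plan's continuation. -/
def IsPCE (u : N → Profile Z → ℝ) (δ : ℝ) (f : Hist Z → Profile Z) : Prop :=
  ∀ h : Hist Z, ∀ C : Finset N, C.Nonempty → ∀ τ : ℕ, ∀ ζ : Profile Z,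
    ∃ i ∈ C, disc u δ i (planPath f h) ≥
      disc u δ i (splice (planPath f h) C τ ζ (planPath f (devHistory h (planPath f h) C τ ζ)))

/-- The set of Perfect Coalitional Equilibrium paths. -/
def PCEP (u : N → Profile Z → ℝ) (δ : ℝ) : Set (RPath Z) :=
  {x | ∃ f : Hist Z → Profile Z, IsPCE u δ f ∧ planPath f [] = x}

/-- Payoff at position `G`: `u_i(G)(x) = a_i(G) + δ^{|G|} U_i(x)`. -/
noncomputable def posPayoff (u : N → Profile Z → ℝ) (δ : ℝ) (i : N) (G : Hist Z)
    (x : RPath Z) : ℝ :=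
  (1 - δ) * (∑ t : Fin G.length, δ ^ (t : ℕ) * u i (G.get t)) + δ ^ G.length * disc u δ i x

/-- The conservative dominion of position `G` relative to the standard of behavior `σ`. -/
def CDOM (u : N → Profile Z → ℝ) (δ : ℝ) (σ : Hist Z → Set (RPath Z)) (G : Hist Z) :
    Set (RPath Z) :=
  {x | ∃ C : Finset N, C.Nonempty ∧ ∃ τ : ℕ, ∃ ζ : Profile Z,
    (σ (devHistory G x C τ ζ)).Nonempty ∧
    ∀ y ∈ σ (devHistory G x C τ ζ), ∀ i ∈ C,
      posPayoff u δ i (devHistory G x C τ ζ) y > posPayoff u δ i G x}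

/-- A standard of behavior is nondiscriminating if it assigns the same set to every position. -/
def Nondiscriminating (σ : Hist Z → Set (RPath Z)) : Prop := ∀ G H, σ G = σ H

/-- Conservative internal stability. -/
def ConsInternallyStable (u : N → Profile Z → ℝ) (δ : ℝ) (σ : Hist Z → Set (RPath Z)) : Prop :=
  ∀ G, σ G ∩ CDOM u δ σ G = ∅

/-- Conservative external stability. -/
def ConsExternallyStable (u : N → Profile Z → ℝ) (δ : ℝ) (σ : Hist Z → Set (RPath Z)) : Prop :=
  ∀ G, (σ G)ᶜ ⊆ CDOM u δ σ G

end Setup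


section Aux

variable {N : Type*} [Fintype N] [DecidableEq N] {Z : N → Type*}

lemma planHist_shift (f : Hist Z → Profile Z) (H : Hist Z) :
    ∀ (h : Hist Z) (n : ℕ),
      planHist f (H ++ h) n = H ++ planHist (fun h' => f (H ++ h')) h n := by
  intro h n
  induction n with
  | zero => rfl
  | succ n ih => simp [planHist, ih, List.append_assoc]

lemma planPath_shift (f : Hist Z → Profile Z) (H : Hist Z) (h : Hist Z) :
    planPath f (H ++ h) = planPath (fun h' => f (H ++ h')) h := by
  funext n
  simp [planPath, planHist_shift]

lemma devHistory_shift (H h : Hist Z) (x : RPath Z) (C : Finset N) (τ : ℕ) (ζ : Profile Z) :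
    devHistory (H ++ h) x C τ ζ = H ++ devHistory h x C τ ζ := by
  simp [devHistory, List.append_assoc]

lemma planPath_mem_PCEP (u : N → Profile Z → ℝ) (δ : ℝ) (f : Hist Z → Profile Z)
    (hf : IsPCE u δ f) (H : Hist Z) : planPath f H ∈ PCEP u δ := by
  refine ⟨fun h' => f (H ++ h'), ?_, ?_⟩
  · intro h C hC τ ζ
    rw [← planPath_shift, ← planPath_shift, ← devHistory_shift]
    exact hf (H ++ h) C hC τ ζ
  · rw [← planPath_shift, List.append_nil]

lemma summable_aux [∀ i, MetricSpace (Z i)] [∀ i, CompactSpace (Z i)] [∀ i, Nonempty (Z i)]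
    (u : N → Profile Z → ℝ) {δ : ℝ} (hu : ∀ i, Continuous (u i)) (hδ0 : 0 < δ) (hδ1 : δ < 1)
    (i : N) (s : RPath Z) : Summable (fun t : ℕ => δ ^ t * u i (s t)) := by
  obtain ⟨M, ⟨z, hz⟩, hM⟩ := (isCompact_range (hu i).norm).exists_isGreatest
    (Set.range_nonempty _)
  refine Summable.of_norm_bounded (g := fun t => M * δ ^ t)
    ((summable_geometric_of_lt_one hδ0.le hδ1).mul_left _) ?_
  intro t
  have h1 : ‖u i (s t)‖ ≤ M := hM ⟨s t, rfl⟩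
  have h2 : ‖(δ : ℝ) ^ t‖ = δ ^ t := by
    rw [norm_pow, Real.norm_eq_abs, abs_of_pos hδ0]
  rw [norm_mul, h2]
  have h3 : (0:ℝ) ≤ δ ^ t := pow_nonneg hδ0.le t
  refine le_trans (mul_le_mul_of_nonneg_left h1 h3) ?_
  simp [mul_comm]

lemma disc_splice [∀ i, MetricSpace (Z i)] [∀ i, CompactSpace (Z i)] [∀ i, Nonempty (Z i)]
    (u : N → Profile Z → ℝ) {δ : ℝ} (hu : ∀ i, Continuous (u i)) (hδ0 : 0 < δ) (hδ1 : δ < 1)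
    (i : N) (x : RPath Z) (C : Finset N) (τ : ℕ) (ζ : Profile Z) (y : RPath Z) :
    disc u δ i (splice x C τ ζ y) =
      (1 - δ) * ∑ t ∈ Finset.range (τ + 1), δ ^ t * u i (splice x C τ ζ y t)
        + δ ^ (τ + 1) * disc u δ i y := by
  have hsum := summable_aux u hu hδ0 hδ1 i (splice x C τ ζ y)
  rw [disc, ← Summable.sum_add_tsum_nat_add (τ + 1) hsum]
  have htail : ∀ n : ℕ, δ ^ (n + (τ + 1)) * u i (splice x C τ ζ y (n + (τ + 1)))
      = δ ^ (τ + 1) * (δ ^ n * u i (y n)) := by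
    intro n
    have h1 : ¬ (n + (τ + 1) < τ) := by omega
    have h2 : n + (τ + 1) ≠ τ := by omega
    have h3 : n + (τ + 1) - τ - 1 = n := by omega
    rw [splice]
    simp only [h1, h2, h3, if_false]
    ring
  rw [tsum_congr htail, tsum_mul_left, disc]
  ring

lemma disc_splice_mono [∀ i, MetricSpace (Z i)] [∀ i, CompactSpace (Z i)] [∀ i, Nonempty (Z i)]
    (u : N → Profile Z → ℝ) {δ : ℝ} (hu : ∀ i, Continuous (u i)) (hδ0 : 0 < δ) (hδ1 : δ < 1)
    (i : N) (x : RPath Z) (C : Finset N) (τ : ℕ) (ζ : Profile Z) {y y' : RPath Z}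
    (h : disc u δ i y ≤ disc u δ i y') :
    disc u δ i (splice x C τ ζ y) ≤ disc u δ i (splice x C τ ζ y') := by
  rw [disc_splice u hu hδ0 hδ1, disc_splice u hu hδ0 hδ1]
  have hhead : ∀ t ∈ Finset.range (τ + 1),
      δ ^ t * u i (splice x C τ ζ y t) = δ ^ t * u i (splice x C τ ζ y' t) := by
    intro t ht
    rw [Finset.mem_range] at ht
    rcases lt_or_eq_of_le (Nat.lt_succ_iff.mp ht) with h' | h'
    · simp [splice, h']
    · simp [splice, h']
  rw [Finset.sum_congr rfl hhead]
  have : (0:ℝ) ≤ δ ^ (τ + 1) := pow_nonneg hδ0.le _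
  nlinarith

end Aux

theorem optimal_penal_code_necessity {N : Type*} [Fintype N] [DecidableEq N] {Z : N → Type*}
    [∀ i, MetricSpace (Z i)] [∀ i, CompactSpace (Z i)] [∀ i, Nonempty (Z i)]
    (u : N → Profile Z → ℝ) (δ : ℝ)
    (hu : ∀ i, Continuous (u i)) (hδ0 : 0 < δ) (hδ1 : δ < 1)
    (x0 : RPath Z) (hx0 : x0 ∈ PCEP u δ) (xp : N → RPath Z)
    (hxp : ∀ i, xp i ∈ PCEP u δ ∧ ∀ y ∈ PCEP u δ, disc u δ i (xp i) ≤ disc u δ i y) :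
    ∀ k : Option N, ∀ τ : ℕ, ∀ C : Finset N, C.Nonempty → ∀ ζ : Profile Z,
      ∃ j ∈ C, disc u δ j (k.elim x0 xp) ≥
        disc u δ j (splice (k.elim x0 xp) C τ ζ (xp j)) := by
  intro k τ C hC ζ
  have hx : k.elim x0 xp ∈ PCEP u δ := by
    cases k with
    | none => exact hx0
    | some i => exact (hxp i).1
  obtain ⟨f, hf, hfx⟩ := hx
  obtain ⟨j, hj, hge⟩ := hf [] C hC τ ζ
  rw [hfx] at hge
  refine ⟨j, hj, le_trans ?_ hge⟩
  have hy : planPath f (devHistory [] (k.elim x0 xp) C τ ζ) ∈ PCEP u δ :=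
    planPath_mem_PCEP u δ f hf _
  exact disc_splice_mono u hu hδ0 hδ1 j _ C τ ζ ((hxp j).2 _ hy)
end

section
/- Optimal penal code for PCE (sufficiency): if there exists a family of paths {x[i]}_{i∈N} ⊆ X such that for all k ∈ {0}∪N, all periods τ ≥ 1, all nonempty coalitions C ⊆ N, and all ζ^C_τ ∈ Z^C, there exists j ∈ C with U_j(x[k]) ≥ U_j(x[k]; ζ^C_τ; x[j]), then x[0] ∈ PCEP. -/
open Set

section MyAux

variable {N : Type*} [Fintype N] [DecidableEq N] {Z : N → Type*}
  [∀ i, MetricSpace (Z i)] [∀ i, CompactSpace (Z i)] [∀ i, Nonempty (Z i)]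

lemma my_disc_summable (u : N → Profile Z → ℝ) {δ : ℝ} (i : N)
    (hu : Continuous (u i)) (h0 : 0 ≤ δ) (h1 : δ < 1) (x : RPath Z) :
    Summable (fun s : ℕ => δ ^ s * u i (x s)) := by
  obtain ⟨M, hM⟩ : ∃ M, ∀ z : Profile Z, ‖u i z‖ ≤ M := by
    obtain ⟨M, hM⟩ := isCompact_univ.exists_bound_of_continuousOn hu.continuousOn
    exact ⟨M, fun z => hM z (mem_univ z)⟩
  refine Summable.of_norm_bounded
    ((summable_geometric_of_lt_one h0 h1).mul_left M) (fun s => ?_)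
  rw [norm_mul, norm_pow, Real.norm_of_nonneg h0]
  calc δ ^ s * ‖u i (x s)‖ ≤ δ ^ s * M :=
        mul_le_mul_of_nonneg_left (hM _) (pow_nonneg h0 s)
    _ = M * δ ^ s := mul_comm _ _

lemma my_disc_shift (u : N → Profile Z → ℝ) {δ : ℝ} (i : N)
    (hu : Continuous (u i)) (h0 : 0 ≤ δ) (h1 : δ < 1) (x : RPath Z) (t : ℕ) :
    disc u δ i x = (1 - δ) * ∑ s ∈ Finset.range t, δ ^ s * u i (x s)
      + δ ^ t * disc u δ i (fun n => x (t + n)) := by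
  have hs := my_disc_summable u i hu h0 h1 x
  have key : ∑' s : ℕ, δ ^ s * u i (x s)
      = ∑ s ∈ Finset.range t, δ ^ s * u i (x s) + ∑' s : ℕ, δ ^ (s + t) * u i (x (s + t)) :=
    (hs.sum_add_tsum_nat_add t).symm
  have key2 : ∑' s : ℕ, δ ^ (s + t) * u i (x (s + t))
      = δ ^ t * ∑' s : ℕ, δ ^ s * u i (x (t + s)) := by
    rw [← tsum_mul_left]
    congr 1; funext s
    rw [pow_add, add_comm s t]; ring
  unfold disc
  rw [key, key2]; ring

lemma my_disc_shift_ge (u : N → Profile Z → ℝ) {δ : ℝ} (i : N)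
    (hu : Continuous (u i)) (h0 : 0 < δ) (h1 : δ < 1) (x y : RPath Z) (t : ℕ)
    (hagree : ∀ s < t, x s = y s) (hge : disc u δ i x ≥ disc u δ i y) :
    disc u δ i (fun n => x (t + n)) ≥ disc u δ i (fun n => y (t + n)) := by
  rw [my_disc_shift u i hu h0.le h1 x t, my_disc_shift u i hu h0.le h1 y t] at hge
  have hsum : ∑ s ∈ Finset.range t, δ ^ s * u i (x s)
      = ∑ s ∈ Finset.range t, δ ^ s * u i (y s) :=
    Finset.sum_congr rfl fun s hs => by rw [hagree s (Finset.mem_range.mp hs)]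
  rw [hsum] at hge
  have hp : (0:ℝ) < δ ^ t := pow_pos h0 t
  nlinarith [hge]

end MyAux

section MyAux2

variable {N : Type*} [Fintype N] [DecidableEq N] {Z : N → Type*}
  [∀ i, MetricSpace (Z i)] [∀ i, CompactSpace (Z i)] [∀ i, Nonempty (Z i)] [Nonempty N]

variable (u : N → Profile Z → ℝ) (δ : ℝ) (x0 : RPath Z) (xp : N → RPath Z)

/-- The path prescribed in state `k`. -/
def myPathOf (k : Option N) : RPath Z := k.elim x0 xp

open Classical in
/-- The coalition detected to deviate from `pathOf k` at absolute time `t` via profile `z`. -/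
noncomputable def myDetC (k : Option N) (t : ℕ) (z : Profile Z) : Finset N :=
  Finset.univ.filter (fun i => z i ≠ myPathOf x0 xp k t i)

/-- A punished player chosen from the detected coalition. -/
noncomputable def myPick (k : Option N) (t : ℕ) (z : Profile Z) : N :=
  Classical.epsilon (fun j => j ∈ myDetC x0 xp k t z ∧
    disc u δ j (myPathOf x0 xp k) ≥
      disc u δ j (splice (myPathOf x0 xp k) (myDetC x0 xp k t z) t z (xp j)))

open Classical in
noncomputable def myStep (s : Option N × ℕ) (z : Profile Z) : Option N × ℕ :=
  if z = myPathOf x0 xp s.1 s.2 then (s.1, s.2 + 1)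
  else (some (myPick u δ x0 xp s.1 s.2 z), 0)

noncomputable def myStf (h : Hist Z) : Option N × ℕ := h.foldl (myStep u δ x0 xp) (none, 0)

noncomputable def myPlan (h : Hist Z) : Profile Z :=
  myPathOf x0 xp (myStf u δ x0 xp h).1 (myStf u δ x0 xp h).2

lemma myStf_append (G : Hist Z) (z : Profile Z) :
    myStf u δ x0 xp (G ++ [z]) = myStep u δ x0 xp (myStf u δ x0 xp G) z := by
  unfold myStf; rw [List.foldl_append]; rfl

lemma myStf_planHist (G : Hist Z) (n : ℕ) :
    myStf u δ x0 xp (planHist (myPlan u δ x0 xp) G n)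
      = ((myStf u δ x0 xp G).1, (myStf u δ x0 xp G).2 + n) := by
  induction n with
  | zero => simp [planHist]
  | succ n ih =>
      show myStf u δ x0 xp (planHist (myPlan u δ x0 xp) G n ++ [_]) = _
      rw [myStf_append, myStep]
      have hz : myPlan u δ x0 xp (planHist (myPlan u δ x0 xp) G n)
          = myPathOf x0 xp (myStf u δ x0 xp G).1 ((myStf u δ x0 xp G).2 + n) := by
        rw [myPlan, ih]
      rw [hz, ih]
      simp [add_assoc]

lemma myPlanPath (G : Hist Z) (n : ℕ) :
    planPath (myPlan u δ x0 xp) G n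
      = myPathOf x0 xp (myStf u δ x0 xp G).1 ((myStf u δ x0 xp G).2 + n) := by
  show myPlan u δ x0 xp (planHist (myPlan u δ x0 xp) G n) = _
  rw [myPlan, myStf_planHist]

lemma planHist_eq_ofFn (f : Hist Z → Profile Z) (G : Hist Z) (τ : ℕ) :
    planHist f G τ = G ++ List.ofFn (fun s : Fin τ => planPath f G s) := by
  induction τ with
  | zero => simp [planHist]
  | succ τ ih =>
      show planHist f G τ ++ [f (planHist f G τ)] = _
      rw [ih, List.ofFn_succ']
      simp [planPath, ih, List.append_assoc]

lemma myStf_devHistory (G : Hist Z) (C : Finset N) (τ : ℕ) (ζ : Profile Z) :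
    myStf u δ x0 xp (devHistory G (planPath (myPlan u δ x0 xp) G) C τ ζ)
      = myStep u δ x0 xp ((myStf u δ x0 xp G).1, (myStf u δ x0 xp G).2 + τ)
          (devProfile (planPath (myPlan u δ x0 xp) G) C τ ζ) := by
  unfold devHistory
  rw [← planHist_eq_ofFn, myStf_append, myStf_planHist]

end MyAux2


theorem optimal_penal_code_sufficiency {N : Type*} [Fintype N] [DecidableEq N] {Z : N → Type*}
    [∀ i, MetricSpace (Z i)] [∀ i, CompactSpace (Z i)] [∀ i, Nonempty (Z i)]
    (u : N → Profile Z → ℝ) (δ : ℝ)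
    (hu : ∀ i, Continuous (u i)) (hδ0 : 0 < δ) (hδ1 : δ < 1)
    (x0 : RPath Z) (xp : N → RPath Z)
    (h : ∀ k : Option N, ∀ τ : ℕ, ∀ C : Finset N, C.Nonempty → ∀ ζ : Profile Z,
      ∃ j ∈ C, disc u δ j (k.elim x0 xp) ≥
        disc u δ j (splice (k.elim x0 xp) C τ ζ (xp j))) :
    x0 ∈ PCEP u δ := by
  rcases isEmpty_or_nonempty N with hE | hN
  · refine ⟨fun _ i => isEmptyElim i, fun G C hC τ ζ => ?_, ?_⟩
    · obtain ⟨i, _⟩ := hC; exact isEmptyElim i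
    · funext n i; exact isEmptyElim i
  refine ⟨myPlan u δ x0 xp, ?_, ?_⟩
  swap
  · funext n
    rw [myPlanPath]
    simp [myStf, myPathOf]
  intro G C hC τ ζ
  set f := myPlan u δ x0 xp with hf
  set k := (myStf u δ x0 xp G).1 with hk
  set t := (myStf u δ x0 xp G).2 with ht
  set P := myPathOf x0 xp k with hPdef
  have hGpath : ∀ n, planPath f G n = P (t + n) := fun n => myPlanPath u δ x0 xp G n
  set z := devProfile (planPath f G) C τ ζ with hz
  have hzeq : ∀ i, z i = if i ∈ C then ζ i else P (t + τ) i := by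
    intro i
    show (if i ∈ C then ζ i else planPath f G τ i) = _
    rw [hGpath]
  have hstH : myStf u δ x0 xp (devHistory G (planPath f G) C τ ζ)
      = myStep u δ x0 xp (k, t + τ) z := myStf_devHistory u δ x0 xp G C τ ζ
  by_cases hcase : z = P (t + τ)
  · -- conforming "deviation": the spliced path equals the original path
    have hstH2 : myStf u δ x0 xp (devHistory G (planPath f G) C τ ζ) = (k, t + τ + 1) := by
      rw [hstH, myStep, if_pos hcase]
    have hy : ∀ n, planPath f (devHistory G (planPath f G) C τ ζ) n = P (t + τ + 1 + n) := by
      intro n; rw [hf, myPlanPath, ← hf, hstH2]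
    have hsp : splice (planPath f G) C τ ζ (planPath f (devHistory G (planPath f G) C τ ζ))
        = planPath f G := by
      funext s
      show (if s < τ then planPath f G s else if s = τ then z
        else planPath f (devHistory G (planPath f G) C τ ζ) (s - τ - 1)) = planPath f G s
      split_ifs with h1 h2
      · rfl
      · subst h2; rw [hGpath]; exact hcase
      · rw [hy, hGpath]
        have : t + τ + 1 + (s - τ - 1) = t + s := by omega
        rw [this]
    obtain ⟨i, hi⟩ := hC
    exact ⟨i, hi, ge_of_eq (by rw [hsp])⟩
  · -- genuine deviation: punish a chosen deviator
    set C' := myDetC x0 xp k (t + τ) z with hC'def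
    have hmemC' : ∀ i, i ∈ C' ↔ z i ≠ P (t + τ) i := by
      intro i; simp [hC'def, myDetC, ← hPdef]
    have hC'ne : C'.Nonempty := by
      rw [Finset.nonempty_iff_ne_empty]
      intro hemp
      apply hcase
      funext i
      have : i ∉ C' := by rw [hemp]; exact Finset.notMem_empty i
      rw [hmemC'] at this
      exact not_not.mp this
    have hC'sub : C' ⊆ C := by
      intro i hiC'
      rw [hmemC'] at hiC'
      by_contra hiC
      exact hiC' (by rw [hzeq i, if_neg hiC])
    set j := myPick u δ x0 xp k (t + τ) z with hj
    have hjspec : j ∈ C' ∧ disc u δ j P ≥ disc u δ j (splice P C' (t + τ) z (xp j)) := by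
      obtain ⟨j0, hj0, hineq⟩ := h k (t + τ) C' hC'ne z
      exact Classical.epsilon_spec (p := fun j => j ∈ C' ∧ disc u δ j P ≥
        disc u δ j (splice P C' (t + τ) z (xp j))) ⟨j0, hj0, hineq⟩
    have hstH2 : myStf u δ x0 xp (devHistory G (planPath f G) C τ ζ) = (some j, 0) := by
      rw [hstH, myStep, if_neg hcase]
    have hyf : planPath f (devHistory G (planPath f G) C τ ζ) = xp j := by
      funext n; rw [hf, myPlanPath, ← hf, hstH2]; simp [myPathOf]
    have hdev1 : devProfile P C' (t + τ) z = z := by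
      funext i
      show (if i ∈ C' then z i else P (t + τ) i) = z i
      split_ifs with hi
      · rfl
      · rw [hmemC'] at hi; exact (not_not.mp hi).symm
    have hdev2 : devProfile P C (t + τ) ζ = z := by
      funext i
      show (if i ∈ C then ζ i else P (t + τ) i) = z i
      rw [hzeq i]
    have hsp1 : splice P C' (t + τ) z (xp j) = splice P C (t + τ) ζ (xp j) := by
      funext s
      show (if s < t + τ then P s else if s = t + τ then devProfile P C' (t + τ) z
          else xp j (s - (t + τ) - 1))
        = (if s < t + τ then P s else if s = t + τ then devProfile P C (t + τ) ζ
          else xp j (s - (t + τ) - 1))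
      split_ifs <;> first | rfl | rw [hdev1, hdev2]
    have hineq2 : disc u δ j (fun n => P (t + n))
        ≥ disc u δ j (fun n => splice P C (t + τ) ζ (xp j) (t + n)) := by
      apply my_disc_shift_ge u j (hu j) hδ0 hδ1
      · intro s hs
        show P s = (if s < t + τ then P s else _)
        rw [if_pos (by omega)]
      · rw [← hsp1]; exact hjspec.2
    have hsp2 : (fun n => splice P C (t + τ) ζ (xp j) (t + n))
        = splice (fun n => P (t + n)) C τ ζ (xp j) := by
      funext s
      show (if t + s < t + τ then P (t + s) else if t + s = t + τ then devProfile P C (t + τ) ζ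
          else xp j (t + s - (t + τ) - 1))
        = (if s < τ then P (t + s) else if s = τ then devProfile (fun n => P (t + n)) C τ ζ
          else xp j (s - τ - 1))
      split_ifs with h1 h2 h3 h4 h5 h6 <;> first
        | rfl
        | omega
        | (try rw [show t + s - (t + τ) - 1 = s - τ - 1 by omega]) <;> rfl
    have hGf : planPath f G = fun n => P (t + n) := funext hGpath
    refine ⟨j, hC'sub hjspec.1, ?_⟩
    rw [hyf, hGf, ← hsp2]
    exact hineq2
end

section
/- Every nondiscriminating Conservative Stable Standard of Behavior σ for the coalitional repeated game situation (γ^C, Γ) satisfies σ(G) ⊆ PCEP for every position G. -/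
open Set

section Aux

open Classical Finset

variable {N : Type*} [Fintype N] [DecidableEq N] {Z : N → Type*}

/-- The shift of a path by `k` periods. -/
def rshift (x : RPath Z) (k : ℕ) : RPath Z := fun t => x (k + t)

lemma rshift_zero (x : RPath Z) : rshift x 0 = x := by
  funext t; simp [rshift]

section Disc

variable [∀ i, MetricSpace (Z i)] [∀ i, CompactSpace (Z i)]
  (u : N → Profile Z → ℝ) {δ : ℝ}

lemma disc_summable (hδ0 : 0 ≤ δ) (hδ1 : δ < 1) (i : N) (hu : Continuous (u i))
    (x : RPath Z) : Summable (fun t : ℕ => δ ^ t * u i (x t)) := by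
  obtain ⟨M, hM⟩ := isCompact_univ.exists_bound_of_continuousOn (hu.continuousOn)
  refine Summable.of_norm_bounded (g := fun t => M * δ ^ t)
    ((summable_geometric_of_lt_one hδ0 hδ1).mul_left M) (fun t => ?_)
  rw [norm_mul, norm_pow, Real.norm_eq_abs, abs_of_nonneg hδ0, mul_comm]
  exact mul_le_mul_of_nonneg_right (hM _ (Set.mem_univ _)) (pow_nonneg hδ0 t)

lemma disc_split (hδ0 : 0 ≤ δ) (hδ1 : δ < 1) (i : N) (hu : Continuous (u i))
    (x : RPath Z) (n : ℕ) :
    disc u δ i x = (1 - δ) * ∑ t ∈ Finset.range n, δ ^ t * u i (x t)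
      + δ ^ n * disc u δ i (rshift x n) := by
  have hs := disc_summable u hδ0 hδ1 i hu x
  have h1 := hs.sum_add_tsum_nat_add n
  have h2 : (∑' t : ℕ, δ ^ (t + n) * u i (x (t + n)))
      = δ ^ n * ∑' t : ℕ, δ ^ t * u i (rshift x n t) := by
    rw [← tsum_mul_left]
    congr 1; funext t
    rw [rshift, pow_add, Nat.add_comm n t]; ring
  rw [disc, ← h1, h2, disc]
  ring

lemma disc_rshift_le (hδ0 : 0 < δ) (hδ1 : δ < 1) (i : N) (hu : Continuous (u i))
    {a b : RPath Z} {k : ℕ} (hagree : ∀ t < k, a t = b t)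
    (h : disc u δ i b ≤ disc u δ i a) :
    disc u δ i (rshift b k) ≤ disc u δ i (rshift a k) := by
  rw [disc_split u hδ0.le hδ1 i hu a k, disc_split u hδ0.le hδ1 i hu b k] at h
  have hsum : (∑ t ∈ Finset.range k, δ ^ t * u i (a t))
      = ∑ t ∈ Finset.range k, δ ^ t * u i (b t) := by
    refine Finset.sum_congr rfl (fun t ht => ?_)
    rw [hagree t (Finset.mem_range.mp ht)]
  rw [hsum] at h
  have hk : (0 : ℝ) < δ ^ k := pow_pos hδ0 k
  nlinarith [h]

lemma rshift_splice (x : RPath Z) (C : Finset N) (τ : ℕ) (ζ : Profile Z) (y : RPath Z) :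
    rshift (splice x C τ ζ y) (τ + 1) = y := by
  funext t
  simp only [rshift, splice]
  rw [if_neg (by omega), if_neg (by omega)]
  have ht : τ + 1 + t - τ - 1 = t := by omega
  rw [ht]

lemma posPayoff_nil (i : N) (x : RPath Z) :
    posPayoff u δ i ([] : Hist Z) x = disc u δ i x := by
  simp [posPayoff]

lemma posPayoff_ofFn (i : N) (w : RPath Z) (n : ℕ) (y : RPath Z) :
    posPayoff u δ i (List.ofFn (fun t : Fin n => w (t : ℕ))) y
      = (1 - δ) * ∑ t ∈ Finset.range n, δ ^ t * u i (w t) + δ ^ n * disc u δ i y := by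
  unfold posPayoff
  have hlen : (List.ofFn (fun t : Fin n => w (t : ℕ))).length = n := List.length_ofFn
  have hsum : (∑ t : Fin (List.ofFn (fun t : Fin n => w (t : ℕ))).length,
        δ ^ (t : ℕ) * u i ((List.ofFn (fun t : Fin n => w (t : ℕ))).get t))
      = ∑ t ∈ Finset.range n, δ ^ t * u i (w t) := by
    have h1 : ∀ t : Fin (List.ofFn (fun t : Fin n => w (t : ℕ))).length,
        δ ^ (t : ℕ) * u i ((List.ofFn (fun t : Fin n => w (t : ℕ))).get t)
          = δ ^ (t : ℕ) * u i (w (t : ℕ)) := by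
      intro t; rw [List.get_ofFn]; simp
    rw [Finset.sum_congr rfl (fun t _ => h1 t),
      Fin.sum_univ_eq_sum_range (fun t => δ ^ t * u i (w t)), hlen]
  rw [hsum, hlen]

lemma devHistory_nil_eq (x : RPath Z) (C : Finset N) (τ : ℕ) (ζ : Profile Z) (y : RPath Z) :
    devHistory ([] : Hist Z) x C τ ζ
      = List.ofFn (fun t : Fin (τ + 1) => splice x C τ ζ y (t : ℕ)) := by
  rw [List.ofFn_succ']
  simp only [devHistory, List.nil_append, List.concat_eq_append]
  congr 1
  · congr 1; funext t
    simp only [splice, Fin.coe_castSucc]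
    rw [if_pos t.isLt]
  · simp [splice]

lemma posPayoff_devHistory_nil (hδ0 : 0 ≤ δ) (hδ1 : δ < 1) (i : N) (hu : Continuous (u i))
    (x : RPath Z) (C : Finset N) (τ : ℕ) (ζ : Profile Z) (y : RPath Z) :
    posPayoff u δ i (devHistory ([] : Hist Z) x C τ ζ) y
      = disc u δ i (splice x C τ ζ y) := by
  rw [devHistory_nil_eq x C τ ζ y, posPayoff_ofFn,
    disc_split u hδ0 hδ1 i hu (splice x C τ ζ y) (τ + 1), rshift_splice]

end Disc

/-- The coalition of deviators from `π m` under the played profile `z`. -/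
noncomputable def devC (π : RPath Z) (m : ℕ) (z : Profile Z) : Finset N :=
  Finset.univ.filter (fun i => z i ≠ π m i)

lemma mem_devC {π : RPath Z} {m : ℕ} {z : Profile Z} {i : N} :
    i ∈ devC π m z ↔ z i ≠ π m i := by simp [devC]

section Machine

variable (u : N → Profile Z → ℝ) (δ : ℝ) (S : Set (RPath Z)) (x0 : RPath Z)

/-- The punishment path chosen after a deviation. -/
noncomputable def punish (π : RPath Z) (m : ℕ) (z : Profile Z) : RPath Z :=
  if h : ∃ y, y ∈ S ∧ ∃ i ∈ devC π m z,
      disc u δ i π ≥ disc u δ i (splice π (devC π m z) m z y)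
  then h.choose else x0

lemma punish_mem (hx0 : x0 ∈ S) (π : RPath Z) (m : ℕ) (z : Profile Z) :
    punish u δ S x0 π m z ∈ S := by
  unfold punish
  split
  · next h => exact h.choose_spec.1
  · exact hx0

lemma punish_spec
    (hKey : ∀ π ∈ S, ∀ C : Finset N, C.Nonempty → ∀ m : ℕ, ∀ z : Profile Z,
      ∃ y ∈ S, ∃ i ∈ C, disc u δ i π ≥ disc u δ i (splice π C m z y))
    {π : RPath Z} (hπ : π ∈ S) {m : ℕ} {z : Profile Z} (hz : z ≠ π m) :
    ∃ i ∈ devC π m z,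
      disc u δ i π ≥ disc u δ i (splice π (devC π m z) m z (punish u δ S x0 π m z)) := by
  have hD : (devC π m z).Nonempty := by
    obtain ⟨i, hi⟩ := Function.ne_iff.mp hz
    exact ⟨i, mem_devC.mpr hi⟩
  have h : ∃ y, y ∈ S ∧ ∃ i ∈ devC π m z,
      disc u δ i π ≥ disc u δ i (splice π (devC π m z) m z y) := by
    obtain ⟨y, hy, hrest⟩ := hKey π hπ (devC π m z) hD m z
    exact ⟨y, hy, hrest⟩
  unfold punish
  rw [dif_pos h]
  exact h.choose_spec.2

/-- One step of the state machine: conform or punish. -/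
noncomputable def stepSt (s : RPath Z × ℕ) (z : Profile Z) : RPath Z × ℕ :=
  if z = s.1 s.2 then (s.1, s.2 + 1) else (punish u δ S x0 s.1 s.2 z, 0)

/-- The state (current punishment path and position on it) reached after history `h`. -/
noncomputable def stateOf (h : Hist Z) : RPath Z × ℕ :=
  h.foldl (stepSt u δ S x0) (x0, 0)

/-- The plan induced by the state machine. -/
noncomputable def planOf : Hist Z → Profile Z :=
  fun h => (stateOf u δ S x0 h).1 (stateOf u δ S x0 h).2

lemma stateOf_append (h l : Hist Z) :
    stateOf u δ S x0 (h ++ l) = l.foldl (stepSt u δ S x0) (stateOf u δ S x0 h) := by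
  simp [stateOf, List.foldl_append]

lemma stateOf_mem (hx0 : x0 ∈ S) (h : Hist Z) : (stateOf u δ S x0 h).1 ∈ S := by
  suffices H : ∀ (l : Hist Z) (s : RPath Z × ℕ), s.1 ∈ S →
      (l.foldl (stepSt u δ S x0) s).1 ∈ S by
    exact H h (x0, 0) hx0
  intro l
  induction l with
  | nil => exact fun s hs => hs
  | cons a l ih =>
    intro s hs
    refine ih _ ?_
    unfold stepSt
    split
    · exact hs
    · exact punish_mem u δ S x0 hx0 _ _ _

lemma foldl_conform (π : RPath Z) (τ : ℕ) :
    ∀ k : ℕ, (List.ofFn fun t : Fin τ => π (k + (t : ℕ))).foldl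
      (stepSt u δ S x0) (π, k) = (π, k + τ) := by
  induction τ with
  | zero => intro k; simp
  | succ τ ih =>
    intro k
    rw [List.ofFn_succ]
    have h1 : (fun i : Fin τ => π (k + ((Fin.succ i : Fin (τ+1)) : ℕ)))
        = fun i : Fin τ => π ((k + 1) + (i : ℕ)) := by
      funext i
      rw [show k + ((Fin.succ i : Fin (τ + 1)) : ℕ) = (k + 1) + (i : ℕ) from by
        rw [Fin.val_succ]; omega]
    simp only [List.foldl_cons, h1]
    have h2 : stepSt u δ S x0 (π, k) (π (k + ((0 : Fin (τ+1)) : ℕ))) = (π, k + 1) := by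
      unfold stepSt
      rw [if_pos (by simp)]
    rw [h2, ih (k + 1)]
    rw [show k + 1 + τ = k + (τ + 1) by omega]

lemma planOf_eq (h : Hist Z) :
    planOf u δ S x0 h = (stateOf u δ S x0 h).1 (stateOf u δ S x0 h).2 := rfl

lemma stateOf_planHist (h : Hist Z) :
    ∀ n : ℕ, stateOf u δ S x0 (planHist (planOf u δ S x0) h n)
      = ((stateOf u δ S x0 h).1, (stateOf u δ S x0 h).2 + n) := by
  intro n
  induction n with
  | zero => simp [planHist]
  | succ n ih =>
    show stateOf u δ S x0 (planHist (planOf u δ S x0) h n ++ [_]) = _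
    rw [stateOf_append, List.foldl_cons, List.foldl_nil]
    have hval : planOf u δ S x0 (planHist (planOf u δ S x0) h n)
        = (stateOf u δ S x0 h).1 ((stateOf u δ S x0 h).2 + n) := by
      rw [planOf_eq, ih]
    rw [ih, hval]
    unfold stepSt
    rw [if_pos rfl]
    simp [Nat.add_assoc]

lemma planPath_planOf (h : Hist Z) :
    planPath (planOf u δ S x0) h
      = rshift (stateOf u δ S x0 h).1 (stateOf u δ S x0 h).2 := by
  funext n
  show planOf u δ S x0 (planHist (planOf u δ S x0) h n) = _
  rw [planOf_eq, stateOf_planHist]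
  rfl

end Machine

lemma splice_rshift (u : N → Profile Z → ℝ) (δ : ℝ)
    (π : RPath Z) (k τ : ℕ) (C : Finset N) (ζ : Profile Z) (p : RPath Z) :
    splice (rshift π k) C τ ζ p
      = rshift (splice π (devC π (k + τ) (devProfile (rshift π k) C τ ζ)) (k + τ)
          (devProfile (rshift π k) C τ ζ) p) k := by
  set z := devProfile (rshift π k) C τ ζ with hz
  set D := devC π (k + τ) z with hD
  have hzD : devProfile π D (k + τ) z = z := by
    funext i
    by_cases hi : i ∈ D
    · exact if_pos hi
    · refine (if_neg hi).trans ?_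
      have h1 : ¬ z i ≠ π (k + τ) i := fun hne => hi (hD ▸ mem_devC.mpr hne)
      push_neg at h1
      exact h1.symm
  funext t
  show splice (rshift π k) C τ ζ p t = splice π D (k + τ) z p (k + t)
  rcases lt_trichotomy t τ with h | h | h
  · show (if t < τ then rshift π k t else _)
        = (if k + t < k + τ then π (k + t) else _)
    rw [if_pos h, if_pos (by omega)]
    rfl
  · subst h
    show (if t < t then _ else if t = t then devProfile (rshift π k) C t ζ else _)
        = (if k + t < k + t then _ else if k + t = k + t then devProfile π D (k + t) z else _)
    rw [if_neg (lt_irrefl t), if_pos rfl, if_neg (lt_irrefl (k + t)), if_pos rfl, hzD]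
  · show (if t < τ then _ else if t = τ then _ else p (t - τ - 1))
        = (if k + t < k + τ then _ else if k + t = k + τ then _ else p (k + t - (k + τ) - 1))
    rw [if_neg (by omega), if_neg (by omega), if_neg (by omega), if_neg (by omega)]
    rw [show t - τ - 1 = k + t - (k + τ) - 1 by omega]

end Aux

theorem nondiscriminating_CSSB_subset_PCEP {N : Type*} [Fintype N] [DecidableEq N] {Z : N → Type*}
    [∀ i, MetricSpace (Z i)] [∀ i, CompactSpace (Z i)] [∀ i, Nonempty (Z i)]
    (u : N → Profile Z → ℝ) (δ : ℝ)
    (hu : ∀ i, Continuous (u i)) (hδ0 : 0 < δ) (hδ1 : δ < 1)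
    (σ : Hist Z → Set (RPath Z)) (hnd : Nondiscriminating σ)
    (hin : ConsInternallyStable u δ σ) (hex : ConsExternallyStable u δ σ) :
    ∀ G, σ G ⊆ PCEP u δ := by
  intro G x hxG
  set S := σ ([] : Hist Z) with hS
  have hx : x ∈ S := by rw [hS, hnd [] G]; exact hxG
  -- Key property: every element of S resists every one-shot coalitional deviation
  -- with some punishment drawn from S.
  have hKey : ∀ π ∈ S, ∀ C : Finset N, C.Nonempty → ∀ m : ℕ, ∀ z : Profile Z,
      ∃ y ∈ S, ∃ i ∈ C, disc u δ i π ≥ disc u δ i (splice π C m z y) := by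
    intro π hπ C hC m z
    have hπn : π ∉ CDOM u δ σ [] := by
      intro hc
      exact Set.eq_empty_iff_forall_notMem.mp (hin []) π ⟨hπ, hc⟩
    simp only [CDOM, Set.mem_setOf_eq] at hπn
    push_neg at hπn
    have hne : (σ (devHistory [] π C m z)).Nonempty := by
      rw [hnd (devHistory [] π C m z) []]; exact ⟨π, hπ⟩
    obtain ⟨y, hy, i, hiC, hle⟩ := hπn C hC m z hne
    rw [hnd (devHistory [] π C m z) []] at hy
    refine ⟨y, hy, i, hiC, ?_⟩
    rw [posPayoff_nil, posPayoff_devHistory_nil u hδ0.le hδ1 i (hu i)] at hle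
    exact hle
  -- The equilibrium plan.
  refine ⟨planOf u δ S x, ?_, ?_⟩
  · -- IsPCE
    intro h C hC τ ζ
    set π : RPath Z := (stateOf u δ S x h).1 with hπdef
    set k : ℕ := (stateOf u δ S x h).2 with hkdef
    have hπS : π ∈ S := stateOf_mem u δ S x hx h
    have hpath : planPath (planOf u δ S x) h = rshift π k := planPath_planOf u δ S x h
    set z : Profile Z := devProfile (rshift π k) C τ ζ with hzdef
    -- compute the state after the deviation history
    have hdev : stateOf u δ S x (devHistory h (rshift π k) C τ ζ)
        = stepSt u δ S x (π, k + τ) z := by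
      show stateOf u δ S x ((h ++ _) ++ [z]) = _
      rw [stateOf_append, stateOf_append]
      have hofn : (List.ofFn fun t : Fin τ => rshift π k (t : ℕ))
          = List.ofFn fun t : Fin τ => π (k + (t : ℕ)) := rfl
      rw [hofn, foldl_conform u δ S x π τ k, List.foldl_cons, List.foldl_nil]
    by_cases hcz : z = π (k + τ)
    · -- conformity: the spliced path is the original path
      obtain ⟨i, hi⟩ := hC
      refine ⟨i, hi, ?_⟩
      have hstate : stateOf u δ S x (devHistory h (rshift π k) C τ ζ) = (π, k + τ + 1) := by
        rw [hdev]; unfold stepSt; rw [if_pos hcz]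
      have hq : planPath (planOf u δ S x) (devHistory h (rshift π k) C τ ζ)
          = rshift π (k + τ + 1) := by
        rw [planPath_planOf, hstate]
      rw [hpath, hq]
      have heq : splice (rshift π k) C τ ζ (rshift π (k + τ + 1)) = rshift π k := by
        funext t
        rcases lt_trichotomy t τ with h' | h' | h'
        · exact if_pos h'
        · subst h'
          show (if t < t then _ else if t = t then devProfile (rshift π k) C t ζ else _)
              = rshift π k t
          rw [if_neg (lt_irrefl t), if_pos rfl, ← hzdef]
          exact hcz
        · show (if t < τ then _ else if t = τ then _ else rshift π (k + τ + 1) (t - τ - 1))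
              = rshift π k t
          rw [if_neg (by omega), if_neg (by omega)]
          show π (k + τ + 1 + (t - τ - 1)) = π (k + t)
          rw [show k + τ + 1 + (t - τ - 1) = k + t by omega]
      rw [heq]
    · -- deviation: punish
      set p : RPath Z := punish u δ S x π (k + τ) z with hpdef
      have hstate : stateOf u δ S x (devHistory h (rshift π k) C τ ζ) = (p, 0) := by
        rw [hdev]; unfold stepSt; rw [if_neg hcz]
      have hq : planPath (planOf u δ S x) (devHistory h (rshift π k) C τ ζ) = p := by
        rw [planPath_planOf, hstate, rshift_zero]
      obtain ⟨i, hiD, hge⟩ := punish_spec u δ S x hKey hπS hcz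
      have hiC : i ∈ C := by
        by_contra hiC
        have : z i = π (k + τ) i := by
          rw [hzdef]
          simp only [devProfile, if_neg hiC, rshift]
        exact mem_devC.mp hiD this
      refine ⟨i, hiC, ?_⟩
      rw [hpath, hq, splice_rshift u δ π k τ C ζ p, ← hzdef]
      have hagree : ∀ t < k, π t = splice π (devC π (k + τ) z) (k + τ) z p t := by
        intro t ht
        exact (if_pos (by omega : t < k + τ)).symm
      exact disc_rshift_le u hδ0 hδ1 i (hu i) hagree hge
  · -- planPath at [] is x
    rw [planPath_planOf]
    show rshift (stateOf u δ S x []).1 (stateOf u δ S x []).2 = x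
    have : stateOf u δ S x ([] : Hist Z) = (x, 0) := rfl
    rw [this, rshift_zero]
end
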